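/- Fix an integer n ≥ 1, set N = 2n + 3, and let V, F, the Verlinde product, and the structure constants N_{ab}^c be as defined. Then for all integers a, b, c with 0 ≤ b ≤ a ≤ n and 0 ≤ c ≤ n: N_{ab}^c = 1 if c ≡ a + b (mod 2) and a − b ≤ c ≤ a + b; N_{ab}^c = −1 if c ≢ a + b (mod 2) and c ≥ 2n + 1 − (a + b); and N_{ab}^c = 0 in all other cases. In particular every structure constant lies in {−1, 0, 1}. -/

import Mathlib

open BigOperators

/-- The folding map `F : ℕ → V` for type `A₂⁽²⁾` at level `2n`, where
`V = Fin (n+1) → ℤ` is the free ℤ-module with basis `e₀, …, e_n` and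
`N = 2n + 3`:  `F m = e_{m'}` if `m ≡ m' (mod N)` with `0 ≤ m' ≤ n`;
`F m = 0` if `m ≡ N - 1 (mod N)`; `F m = -e_{m'}` if `m + m' + 2 ≡ 0 (mod N)`
with `0 ≤ m' ≤ n`. -/
def foldA2 (n m : ℕ) : Fin (n + 1) → ℤ :=
  if h : m % (2 * n + 3) ≤ n then
    Pi.single (⟨m % (2 * n + 3), by omega⟩ : Fin (n + 1)) 1
  else if h2 : m % (2 * n + 3) = 2 * n + 2 then 0
  else - Pi.single (⟨2 * n + 1 - m % (2 * n + 3), by omega⟩ : Fin (n + 1)) 1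

/-- The basis vector `e_m` of `V = Fin (n+1) → ℤ` (zero if `m > n`). -/
def eN (n m : ℕ) : Fin (n + 1) → ℤ :=
  if h : m ≤ n then Pi.single (⟨m, by omega⟩ : Fin (n + 1)) 1 else 0

/-- The Verlinde product on `V = Fin (n+1) → ℤ`: the ℤ-bilinear product with
`e_a · e_b = ∑_{i=0}^{min a b} F (a + b - 2 i)`. -/
def vmul (n : ℕ) (x y : Fin (n + 1) → ℤ) : Fin (n + 1) → ℤ :=
  fun c => ∑ a : Fin (n + 1), ∑ b : Fin (n + 1),
    x a * y b * (∑ i ∈ Finset.range (min a.1 b.1 + 1), foldA2 n (a.1 + b.1 - 2 * i)) c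

/-- The structure constants `N_{ab}^c` of the Verlinde product, defined by
`e_a · e_b = ∑_c N_{ab}^c e_c`. -/
def Nconst (n a b c : ℕ) : ℤ :=
  if h : c ≤ n then vmul n (eN n a) (eN n b) ⟨c, by omega⟩ else 0

lemma key (n a b c : ℕ) (hba : b ≤ a) (han : a ≤ n) (hcn : c ≤ n) :
    Nconst n a b c =
      ∑ i ∈ Finset.range (b + 1), foldA2 n (a + b - 2 * i) ⟨c, by omega⟩ := by
  unfold Nconst vmul eN
  rw [dif_pos hcn, dif_pos (le_trans hba han), dif_pos han]
  simp only [Pi.single_apply, Finset.sum_apply, ite_mul, one_mul, zero_mul,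
    mul_ite, mul_one, mul_zero, Finset.sum_ite_eq', Finset.mem_univ, if_true,
    min_eq_right hba]

lemma fold_eval (n m c : ℕ) (hm : m ≤ 2 * n) (hc : c ≤ n) :
    foldA2 n m ⟨c, by omega⟩ =
      (if m = c then 1 else 0) +
      (if n + 1 ≤ m ∧ m + c = 2 * n + 1 then -1 else 0) := by
  have hmod : m % (2 * n + 3) = m := Nat.mod_eq_of_lt (by omega)
  unfold foldA2
  split_ifs with h1 h2 <;>
    rw [hmod] at h1 <;>
    simp only [Pi.neg_apply, Pi.single_apply, Pi.zero_apply, Fin.mk.injEq, hmod] <;>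
    rw [hmod] at * <;>
    first
    | omega
    | (split_ifs <;> omega)

lemma sum1 (a b c : ℕ) (hba : b ≤ a) :
    (∑ i ∈ Finset.range (b + 1), if a + b - 2 * i = c then (1 : ℤ) else 0) =
      if c % 2 = (a + b) % 2 ∧ a - b ≤ c ∧ c ≤ a + b then 1 else 0 := by
  by_cases h : c % 2 = (a + b) % 2 ∧ a - b ≤ c ∧ c ≤ a + b
  · rw [if_pos h]
    rw [Finset.sum_eq_single_of_mem ((a + b - c) / 2)
      (Finset.mem_range.2 (by omega))]
    · rw [if_pos (by omega)]
    · intro i hi hne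
      rw [Finset.mem_range] at hi
      rw [if_neg (by omega)]
  · rw [if_neg h]
    apply Finset.sum_eq_zero
    intro i hi
    rw [Finset.mem_range] at hi
    rw [if_neg (by omega)]

lemma sum2 (n a b c : ℕ) (hba : b ≤ a) (han : a ≤ n) (hcn : c ≤ n) :
    (∑ i ∈ Finset.range (b + 1),
        if n + 1 ≤ a + b - 2 * i ∧ (a + b - 2 * i) + c = 2 * n + 1 then (-1 : ℤ) else 0) =
      if c % 2 ≠ (a + b) % 2 ∧ 2 * n + 1 ≤ a + b + c then -1 else 0 := by
  by_cases h : c % 2 ≠ (a + b) % 2 ∧ 2 * n + 1 ≤ a + b + c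
  · rw [if_pos h]
    rw [Finset.sum_eq_single_of_mem ((a + b + c - (2 * n + 1)) / 2)
      (Finset.mem_range.2 (by omega))]
    · rw [if_pos (by omega)]
    · intro i hi hne
      rw [Finset.mem_range] at hi
      rw [if_neg (by omega)]
  · rw [if_neg h]
    apply Finset.sum_eq_zero
    intro i hi
    rw [Finset.mem_range] at hi
    rw [if_neg (by omega)]

/-- Explicit values of the structure constants `N_{ab}^c` of the Verlinde
algebra of type `A₂⁽²⁾` at level `2n`: for `0 ≤ b ≤ a ≤ n` and `0 ≤ c ≤ n`,
`N_{ab}^c = 1` if `c ≡ a + b (mod 2)` and `a - b ≤ c ≤ a + b`;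
`N_{ab}^c = -1` if `c ≢ a + b (mod 2)` and `c ≥ 2n + 1 - (a + b)`;
`N_{ab}^c = 0` otherwise.  In particular `N_{ab}^c ∈ {-1, 0, 1}`. -/
theorem Nconst_explicit (n : ℕ) (hn : 1 ≤ n) (a b c : ℕ)
    (hba : b ≤ a) (han : a ≤ n) (hcn : c ≤ n) :
    (Nconst n a b c =
      if c % 2 = (a + b) % 2 ∧ a - b ≤ c ∧ c ≤ a + b then 1
      else if c % 2 ≠ (a + b) % 2 ∧ 2 * n + 1 ≤ a + b + c then -1
      else 0) ∧
    Nconst n a b c ∈ ({-1, 0, 1} : Set ℤ) := by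
  have hval : Nconst n a b c =
      if c % 2 = (a + b) % 2 ∧ a - b ≤ c ∧ c ≤ a + b then 1
      else if c % 2 ≠ (a + b) % 2 ∧ 2 * n + 1 ≤ a + b + c then -1
      else 0 := by
    rw [key n a b c hba han hcn]
    have : ∀ i ∈ Finset.range (b + 1),
        foldA2 n (a + b - 2 * i) ⟨c, by omega⟩ =
          (if a + b - 2 * i = c then (1 : ℤ) else 0) +
          (if n + 1 ≤ a + b - 2 * i ∧ (a + b - 2 * i) + c = 2 * n + 1 then (-1 : ℤ) else 0) := by
      intro i hi
      exact fold_eval n (a + b - 2 * i) c (by omega) hcn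
    rw [Finset.sum_congr rfl this, Finset.sum_add_distrib, sum1 a b c hba,
      sum2 n a b c hba han hcn]
    split_ifs <;> omega
  refine ⟨hval, ?_⟩
  rw [hval]
  split_ifs <;> simp
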